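/- The polynomial Δ₁(x) = (27 − 15√3 − 54y)x³ − 9·2^{1/3}x² + 12√3·2^{2/3}x − 8 and the linear polynomial Δ₂(x) = (√3 + 2y − 1)x − 2^{1/3} have no common root for any y ∈ [0,1] \ {1/2}; equivalently the resultant of Δ₁ and Δ₂ in x vanishes only at y = 1/2 on [0,1]. -/

import Mathlib

/-- For any `y ∈ [0,1]` with `y ≠ 1/2`, the polynomials
`Δ₁(x) = (27 − 15√3 − 54y)x³ − 9·2^{1/3}x² + 12√3·2^{2/3}x − 8` and
`Δ₂(x) = (√3 + 2y − 1)x − 2^{1/3}` have no common (complex) root. -/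
theorem delta_factors_no_common_root (y : ℝ) (hy0 : 0 ≤ y) (hy1 : y ≤ 1)
    (hy : y ≠ 1 / 2) (x : ℂ) :
    ¬ ((((27 - 15 * Real.sqrt 3 - 54 * y : ℝ) : ℂ) * x ^ 3
          - ((9 * (2 : ℝ) ^ ((1 : ℝ) / 3) : ℝ) : ℂ) * x ^ 2
          + ((12 * Real.sqrt 3 * (2 : ℝ) ^ ((2 : ℝ) / 3) : ℝ) : ℂ) * x - 8 = 0)
        ∧ (((Real.sqrt 3 + 2 * y - 1 : ℝ) : ℂ) * x
            - (((2 : ℝ) ^ ((1 : ℝ) / 3) : ℝ) : ℂ) = 0)) := by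
  rintro ⟨h1, h2⟩
  set a : ℝ := (2 : ℝ) ^ ((1 : ℝ) / 3) with ha_def
  set b : ℝ := (2 : ℝ) ^ ((2 : ℝ) / 3) with hb_def
  set s : ℝ := Real.sqrt 3 with hs_def
  have ha3 : a ^ 3 = 2 := by
    rw [ha_def, ← Real.rpow_natCast ((2:ℝ) ^ ((1:ℝ)/3)) 3,
      ← Real.rpow_mul (by norm_num)]
    norm_num
  have hab : a * b = 2 := by
    rw [ha_def, hb_def, ← Real.rpow_add (by norm_num)]
    norm_num
  have hs2 : s ^ 2 = 3 := Real.sq_sqrt (by norm_num)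
  have hs1 : 1 < s := by nlinarith [Real.sqrt_nonneg 3]
  set c : ℝ := s + 2 * y - 1 with hc_def
  have hc : 0 < c := by simp only [hc_def]; linarith
  have hcC : (c : ℂ) ≠ 0 := by
    exact_mod_cast hc.ne'
  have hx : x = ((a / c : ℝ) : ℂ) := by
    push_cast
    rw [eq_div_iff hcC]
    linear_combination h2
  rw [hx] at h1
  have h1' : (27 - 15 * s - 54 * y) * (a / c) ^ 3 - 9 * a * (a / c) ^ 2
      + 12 * s * b * (a / c) - 8 = 0 := by
    exact_mod_cast h1
  have hf3 : c ^ 3 * ((27 - 15 * s - 54 * y) * a ^ 3 - 9 * a * a ^ 2 * c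
      + 12 * s * (a * b) * c ^ 2 - 8 * c ^ 3) = 0 := by
    field_simp at h1'
    linear_combination c ^ 3 * h1'
  have hf : (27 - 15 * s - 54 * y) * a ^ 3 - 9 * a * a ^ 2 * c
      + 12 * s * (a * b) * c ^ 2 - 8 * c ^ 3 = 0 := by
    rcases mul_eq_zero.mp hf3 with h | h
    · exact absurd h (pow_ne_zero _ hc.ne')
    · exact h
  have hkey : (2 * y - 1) ^ 3 = 0 := by
    have h2ys : 2 * y - 1 = c - s := by rw [hc_def]; ring
    rw [h2ys]
    linear_combination (-1/8 : ℝ) * hf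
      + ((27 - 15 * s - 54 * y - 9 * c) / 8) * ha3
      + (3/2 * s * c ^ 2) * hab + (s - 3 * c) * hs2 + (4 * s + 12 * y - 6) * hs2
  have : 2 * y - 1 = 0 := by
    exact pow_eq_zero_iff (by norm_num) |>.mp hkey
  apply hy
  linarith
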